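/- Let R = ℤ[β₁,β₂,γ,c₂,c₃]/(2γ, γ(β₁+γ), 2c₃) and S = ℤ[x₁,x₂,c₂,c₃]/(2c₃). Let φ : R → S be the ring homomorphism determined by β₁ ↦ x₁+x₂, β₂ ↦ x₁·x₂, γ ↦ 0, c₂ ↦ c₂ and c₃ ↦ c₃ (this assignment sends each of the relations 2γ, γ(β₁+γ), 2c₃ to zero in S, so φ is well defined). Then the kernel of φ is exactly the ideal of R generated by the class of γ. -/

import Mathlib

open MvPolynomial

/-- The ideal `(2γ, γ(β₁+γ), 2c₃)` of `ℤ[β₁,β₂,γ,c₂,c₃] = MvPolynomial (Fin 5) ℤ`,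
where `β₁ = X 0`, `β₂ = X 1`, `γ = X 2`, `c₂ = X 3`, `c₃ = X 4`. -/
noncomputable def Irel : Ideal (MvPolynomial (Fin 5) ℤ) :=
  Ideal.span {2 * X 2, X 2 * (X 0 + X 2), 2 * X 4}

/-- The ideal `(2c₃)` of `ℤ[x₁,x₂,c₂,c₃] = MvPolynomial (Fin 4) ℤ`,
where `x₁ = X 0`, `x₂ = X 1`, `c₂ = X 2`, `c₃ = X 3`. -/
noncomputable def Jrel : Ideal (MvPolynomial (Fin 4) ℤ) :=
  Ideal.span {2 * X 3}

/-! ### Auxiliary machinery -/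

lemma esymm_two' (R : Type*) [CommRing R] : esymm (Fin 2) R 2 = X 0 * X 1 := by
  rw [esymm, show Finset.powersetCard 2 (Finset.univ : Finset (Fin 2)) = {Finset.univ} from by decide]
  simp [Fin.prod_univ_two]

/-- The "elementary symmetric substitution" endomorphism in the first two of four
variables, over an arbitrary base ring. -/
noncomputable def sigk (k : Type*) [CommRing k] :
    MvPolynomial (Fin 4) k →ₐ[k] MvPolynomial (Fin 4) k :=
  aeval ![X 0 + X 1, X 0 * X 1, X 2, X 3]

noncomputable def e4 : Fin 4 ≃ (Fin 2 ⊕ Fin 2) where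
  toFun := ![Sum.inl 0, Sum.inl 1, Sum.inr 0, Sum.inr 1]
  invFun := Sum.elim ![0,1] ![2,3]
  left_inv := by decide
  right_inv := by decide

noncomputable def Ek (k : Type*) [CommRing k] :
    MvPolynomial (Fin 4) k ≃ₐ[k] MvPolynomial (Fin 2) (MvPolynomial (Fin 2) k) :=
  (renameEquiv k e4).trans (sumAlgEquiv k (Fin 2) (Fin 2))

lemma sigk_injective (k : Type*) [CommRing k] : Function.Injective (sigk k) := by
  set R := MvPolynomial (Fin 2) k with hR
  let F : MvPolynomial (Fin 2) R →ₐ[R] MvPolynomial (Fin 2) R :=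
    aeval (fun i : Fin 2 => esymm (Fin 2) R (i + 1))
  have hF : Function.Injective F := by
    intro a b hab
    refine esymmAlgHom_fin_injective R (le_refl 2) ?_
    apply Subtype.ext
    rw [esymmAlgHom_apply, esymmAlgHom_apply]
    exact hab
  have hXl : ∀ b : Fin 2, sumRingEquiv k (Fin 2) (Fin 2) (X (Sum.inl b)) = X b :=
    fun b => by rw [sumRingEquiv_X_inl]
  have hXr : ∀ c : Fin 2, sumRingEquiv k (Fin 2) (Fin 2) (X (Sum.inr c)) = C (X c) :=
    fun c => by rw [sumRingEquiv_X_inr]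
  have key : (Ek k).toAlgHom.comp (sigk k) = (F.restrictScalars k).comp (Ek k).toAlgHom := by
    apply MvPolynomial.algHom_ext
    intro i
    fin_cases i <;>
      simp [Ek, sigk, e4, F, esymm_two', esymm_one, Fin.sum_univ_two,
        sumAlgEquiv_X_inl, sumAlgEquiv_X_inr, renameEquiv, aeval_X, algebraMap_eq, hXl, hXr]
  intro a b hab
  have h2 : ∀ p, F (Ek k p) = Ek k (sigk k p) := fun p => (DFunLike.congr_fun key p).symm
  exact (Ek k).injective (hF (by rw [h2, h2, hab]))

/-- Quotient trick: a polynomial is congruent, modulo an ideal `I`, to any substitution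
of it whose values are congruent to the variables mod `I`. -/
lemma sub_aeval_mem {n : ℕ} (f : Fin n → MvPolynomial (Fin n) ℤ) (I : Ideal (MvPolynomial (Fin n) ℤ))
    (hf : ∀ i, Ideal.Quotient.mk I (f i) = Ideal.Quotient.mk I (X i)) (p : MvPolynomial (Fin n) ℤ) :
    p - aeval f p ∈ I := by
  have h : (Ideal.Quotient.mkₐ ℤ I).comp (aeval f) = Ideal.Quotient.mkₐ ℤ I := by
    apply MvPolynomial.algHom_ext
    intro i
    simp [hf i]
  have := DFunLike.congr_fun h p
  simp only [AlgHom.comp_apply, Ideal.Quotient.mkₐ_eq_mk] at this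
  exact (Ideal.Quotient.eq).mp this.symm

noncomputable def psia : MvPolynomial (Fin 5) ℤ →ₐ[ℤ] MvPolynomial (Fin 4) ℤ :=
  aeval ![X 0 + X 1, X 0 * X 1, 0, X 2, X 3]

noncomputable def iota : MvPolynomial (Fin 4) ℤ →ₐ[ℤ] MvPolynomial (Fin 5) ℤ :=
  aeval ![X 0, X 1, X 3, X 4]

noncomputable def pia : MvPolynomial (Fin 5) ℤ →ₐ[ℤ] MvPolynomial (Fin 4) ℤ :=
  aeval ![X 0, X 1, 0, X 2, X 3]

noncomputable def tau5 : MvPolynomial (Fin 5) ℤ →ₐ[ℤ] MvPolynomial (Fin 5) ℤ :=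
  aeval ![X 0, X 1, 0, X 3, X 4]

noncomputable def rhoa : MvPolynomial (Fin 4) ℤ →ₐ[ℤ] MvPolynomial (Fin 4) ℤ :=
  aeval ![X 0, X 1, X 2, 0]

lemma psia_comp_iota : psia.comp iota = sigk ℤ := by
  apply MvPolynomial.algHom_ext
  intro i
  fin_cases i <;> simp [psia, iota, sigk]

lemma iota_comp_pia : iota.comp pia = tau5 := by
  apply MvPolynomial.algHom_ext
  intro i
  fin_cases i <;> simp [pia, iota, tau5]

lemma rhoa_comp_sigk : rhoa.comp (sigk ℤ) = (sigk ℤ).comp rhoa := by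
  apply MvPolynomial.algHom_ext
  intro i
  fin_cases i <;> simp [rhoa, sigk]

lemma map2_comp_sigk :
    (MvPolynomial.map (Int.castRingHom (ZMod 2))).comp (sigk ℤ).toRingHom
      = (sigk (ZMod 2)).toRingHom.comp (MvPolynomial.map (Int.castRingHom (ZMod 2))) := by
  apply MvPolynomial.ringHom_ext
  · intro a
    simp [sigk, aeval_C, algebraMap_eq]
  · intro i
    fin_cases i <;> simp [sigk]

/-- The core lemma: preimage of `(2c₃)` under the symmetrization map is `(2c₃)`. -/
lemma sigk_preimage (r : MvPolynomial (Fin 4) ℤ) (h : sigk ℤ r ∈ Jrel) : r ∈ Jrel := by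
  rw [Jrel, Ideal.mem_span_singleton] at h ⊢
  obtain ⟨q, hq⟩ := h
  -- step 1: r is divisible by 2
  have hm2 : MvPolynomial.map (Int.castRingHom (ZMod 2)) r = 0 := by
    apply sigk_injective (ZMod 2)
    have hcomm := DFunLike.congr_fun map2_comp_sigk r
    simp only [RingHom.comp_apply, AlgHom.toRingHom_eq_coe, RingHom.coe_coe] at hcomm
    rw [map_zero, ← hcomm, hq]
    have h2 : (MvPolynomial.map (Int.castRingHom (ZMod 2))) (2 : MvPolynomial (Fin 4) ℤ) = 0 := by
      rw [show (2 : MvPolynomial (Fin 4) ℤ) = C (2 : ℤ) by simp, map_C,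
        show (Int.castRingHom (ZMod 2)) 2 = 0 from by decide, map_zero]
    rw [map_mul, map_mul, h2, zero_mul, zero_mul]
  have h2dvd : ∃ r', r = 2 * r' := by
    have hker : r ∈ RingHom.ker (MvPolynomial.map (Int.castRingHom (ZMod 2))
        : MvPolynomial (Fin 4) ℤ →+* MvPolynomial (Fin 4) (ZMod 2)) := hm2
    rw [MvPolynomial.ker_map, ZMod.ker_intCastRingHom] at hker
    rw [Ideal.map_span, Set.image_singleton] at hker
    have : ((2 : ℕ) : ℤ) = (2 : ℤ) := by norm_num
    rw [this] at hker
    rw [Ideal.mem_span_singleton] at hker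
    obtain ⟨r', hr'⟩ := hker
    exact ⟨r', by rw [hr']; rw [show ((C (2:ℤ)) : MvPolynomial (Fin 4) ℤ) = 2 by simp]⟩
  obtain ⟨r', rfl⟩ := h2dvd
  -- step 2: cancel the 2
  have h2ne : (2 : MvPolynomial (Fin 4) ℤ) ≠ 0 := by
    intro hc
    have := congrArg constantCoeff hc
    rw [map_ofNat, map_zero] at this
    norm_num at this
  have hσr' : sigk ℤ r' = X 3 * q := by
    have h2' : sigk ℤ (2 * r') = 2 * sigk ℤ r' := by rw [map_mul, map_ofNat]
    rw [h2'] at hq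
    apply mul_left_cancel₀ h2ne
    rw [hq]
    ring
  -- step 3: r' is divisible by X 3
  have hρ : rhoa r' = 0 := by
    apply sigk_injective ℤ
    have hcomm := DFunLike.congr_fun rhoa_comp_sigk r'
    simp only [AlgHom.comp_apply] at hcomm
    rw [map_zero, ← hcomm, hσr', map_mul]
    have : rhoa (X 3) = 0 := by simp [rhoa]
    rw [this, zero_mul]
  have hX3 : r' - rhoa r' ∈ Ideal.span {(X 3 : MvPolynomial (Fin 4) ℤ)} := by
    apply sub_aeval_mem
    intro i
    fin_cases i <;> simp [Ideal.Quotient.eq_zero_iff_mem,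
      Ideal.subset_span (Set.mem_singleton (X 3 : MvPolynomial (Fin 4) ℤ))]
  rw [hρ, sub_zero, Ideal.mem_span_singleton] at hX3
  obtain ⟨t, ht⟩ := hX3
  exact ⟨t, by rw [ht]; ring⟩

/-- Let `R = ℤ[β₁,β₂,γ,c₂,c₃]/(2γ, γ(β₁+γ), 2c₃)` and `S = ℤ[x₁,x₂,c₂,c₃]/(2c₃)`, and
let `φ : R → S` be the ring homomorphism determined by `β₁ ↦ x₁+x₂`, `β₂ ↦ x₁x₂`,
`γ ↦ 0`, `c₂ ↦ c₂`, `c₃ ↦ c₃`.  Then `ker φ` is exactly the ideal generated by the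
class of `γ`. -/
theorem stmt_5
    (φ : (MvPolynomial (Fin 5) ℤ ⧸ Irel) →+* (MvPolynomial (Fin 4) ℤ ⧸ Jrel))
    (hβ₁ : φ (Ideal.Quotient.mk Irel (X 0)) = Ideal.Quotient.mk Jrel (X 0 + X 1))
    (hβ₂ : φ (Ideal.Quotient.mk Irel (X 1)) = Ideal.Quotient.mk Jrel (X 0 * X 1))
    (hγ : φ (Ideal.Quotient.mk Irel (X 2)) = 0)
    (hc₂ : φ (Ideal.Quotient.mk Irel (X 3)) = Ideal.Quotient.mk Jrel (X 2))
    (hc₃ : φ (Ideal.Quotient.mk Irel (X 4)) = Ideal.Quotient.mk Jrel (X 3)) :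
    RingHom.ker φ = Ideal.span {Ideal.Quotient.mk Irel (X 2)} := by
  have hcomp : (φ.toIntAlgHom.comp (Ideal.Quotient.mkₐ ℤ Irel))
      = (Ideal.Quotient.mkₐ ℤ Jrel).comp psia := by
    apply MvPolynomial.algHom_ext
    intro i
    fin_cases i <;>
      (show φ (Ideal.Quotient.mk Irel _) = Ideal.Quotient.mk Jrel (psia _)
       simp [psia, RingHom.toIntAlgHom_apply, hβ₁, hβ₂, hγ, hc₂, hc₃])
  have hφmk : ∀ p : MvPolynomial (Fin 5) ℤ,
      φ (Ideal.Quotient.mk Irel p) = Ideal.Quotient.mk Jrel (psia p) := by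
    intro p
    have := DFunLike.congr_fun hcomp p
    exact this
  apply le_antisymm
  · -- ker φ ⊆ (γ)
    intro x hx
    obtain ⟨p, rfl⟩ := Ideal.Quotient.mk_surjective x
    rw [RingHom.mem_ker, hφmk] at hx
    have hψ : psia p ∈ Jrel := Ideal.Quotient.eq_zero_iff_mem.mp hx
    -- decompose p = tau5 p + X 2 * s
    have hX2 : p - tau5 p ∈ Ideal.span {(X 2 : MvPolynomial (Fin 5) ℤ)} := by
      apply sub_aeval_mem
      intro i
      fin_cases i <;> simp [Ideal.Quotient.eq_zero_iff_mem,
        Ideal.subset_span (Set.mem_singleton (X 2 : MvPolynomial (Fin 5) ℤ))]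
    rw [Ideal.mem_span_singleton] at hX2
    obtain ⟨s, hs⟩ := hX2
    -- psia p = sigk (pia p)
    have hpsitau : psia (tau5 p) = sigk ℤ (pia p) := by
      rw [← iota_comp_pia, ← psia_comp_iota]
      simp
    have hpsis : psia (p - tau5 p) = 0 := by
      rw [hs, map_mul]
      have : psia (X 2) = 0 := by simp [psia]
      rw [this, zero_mul]
    have hσmem : sigk ℤ (pia p) ∈ Jrel := by
      rw [← hpsitau]
      have : psia (tau5 p) = psia p - psia (p - tau5 p) := by rw [map_sub]; ring
      rw [this, hpsis, sub_zero]
      exact hψ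
    have hr : pia p ∈ Jrel := sigk_preimage _ hσmem
    rw [Jrel, Ideal.mem_span_singleton] at hr
    obtain ⟨t, htt⟩ := hr
    -- now assemble
    have hiota : iota (pia p) = (2 * X 4) * iota t := by
      rw [htt, map_mul, map_mul]
      have h2 : iota (2 : MvPolynomial (Fin 4) ℤ) = 2 := by rw [map_ofNat]
      have h3 : iota (X 3) = X 4 := by simp [iota]
      rw [h2, h3]
    have htau : tau5 p = (2 * X 4) * iota t := by
      rw [← hiota, ← iota_comp_pia]
      rfl
    have h24 : Ideal.Quotient.mk Irel ((2 : MvPolynomial (Fin 5) ℤ) * X 4) = 0 := by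
      rw [Ideal.Quotient.eq_zero_iff_mem, Irel]
      exact Ideal.subset_span (by simp)
    have hp : p = (2 * X 4) * iota t + X 2 * s := by
      rw [← htau, ← hs]; ring
    rw [hp, map_add, map_mul, h24, zero_mul, zero_add, map_mul]
    exact Ideal.mem_span_singleton.mpr ⟨Ideal.Quotient.mk Irel s, rfl⟩
  · -- (γ) ⊆ ker φ
    rw [Ideal.span_le]
    intro x hx
    rw [Set.mem_singleton_iff] at hx
    subst hx
    exact hγ
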